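/- Let p > 1/2, let c = [[c₁, c₁₂],[c₁₂, c₂]] be a real positive definite 2×2 matrix, and let a₁ > −p and a₂ > −p. Then ∫∫∫_{x₁ > 0, x₂ > 0, x₁x₂ − x₁₂² > 0} x₁^{a₁} x₂^{a₂} · (det c)^p / Γ₂(p) · e^{−(c₁x₁ + c₂x₂ + 2c₁₂x₁₂)} (x₁x₂ − x₁₂²)^{p − 3/2} dx₁ dx₂ dx₁₂ = (det c)^p / (c₁^{a₁+p} c₂^{a₂+p}) · Γ(a₁+p)Γ(a₂+p)/Γ(p)² · ₂F₁(a₁+p, a₂+p; p; c₁₂²/(c₁c₂)). -/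

import Mathlib

open MeasureTheory Real

noncomputable section

/-- The rising factorial `(a)_n = a (a+1) ⋯ (a+n-1)`. -/
def risingFac (a : ℝ) (n : ℕ) : ℝ := ∏ i ∈ Finset.range n, (a + i)

/-- The Gauss hypergeometric function `₂F₁(a, b; c; z)`. -/
def gaussHyp (a b c z : ℝ) : ℝ :=
  ∑' n : ℕ, risingFac a n * risingFac b n / (risingFac c n * (n.factorial : ℝ)) * z ^ n

/-- The bivariate gamma function `Γ₂(p) = π^{1/2} Γ(p) Γ(p - 1/2)`. -/
def Gamma2 (p : ℝ) : ℝ := Real.pi ^ ((1 : ℝ) / 2) * Real.Gamma p * Real.Gamma (p - 1 / 2)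

open Set
open scoped ENNReal


lemma risingFac_zero (a : ℝ) : risingFac a 0 = 1 := by simp [risingFac]
lemma risingFac_succ (a : ℝ) (n : ℕ) : risingFac a (n+1) = risingFac a n * (a + n) := by
  simp [risingFac, Finset.prod_range_succ]

lemma risingFac_pos {a : ℝ} (ha : 0 < a) (n : ℕ) : 0 < risingFac a n := by
  induction n with
  | zero => simp [risingFac_zero]
  | succ n ih => rw [risingFac_succ]; positivity

lemma Gamma_add_nat {a : ℝ} (ha : 0 < a) (n : ℕ) :
    Real.Gamma (a + n) = Real.Gamma a * risingFac a n := by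
  induction n with
  | zero => simp [risingFac_zero]
  | succ n ih =>
      have h : a + (n+1 : ℕ) = (a + n) + 1 := by push_cast; ring
      rw [h, Real.Gamma_add_one (by positivity), ih, risingFac_succ]; ring

lemma factorial_two_mul (n : ℕ) :
    ((2*n).factorial : ℝ) = 4 ^ n * n.factorial * risingFac (1/2) n := by
  induction n with
  | zero => simp [risingFac_zero]
  | succ n ih =>
      have : 2 * (n+1) = (2*n) + 1 + 1 := by ring
      rw [this, Nat.factorial_succ, Nat.factorial_succ, Nat.factorial_succ, risingFac_succ]
      push_cast
      rw [ih]
      push_cast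
      ring

lemma gammaAux {σ r : ℝ} (hσ : 0 < σ) (hr : 0 < r) :
    IntegrableOn (fun x : ℝ => x ^ (σ-1) * Real.exp (-(r*x))) (Ioi 0) ∧
      ∫ x in Ioi (0:ℝ), x ^ (σ-1) * Real.exp (-(r*x)) = Real.Gamma σ / r ^ σ := by
  constructor
  · have := integrableOn_rpow_mul_exp_neg_mul_rpow (p := 1) (s := σ - 1) (b := r)
      (by linarith) zero_lt_one hr
    refine this.congr_fun (fun x hx => ?_) measurableSet_Ioi
    beta_reduce
    rw [Real.rpow_one, neg_mul]
  · rw [integral_rpow_mul_exp_neg_mul_Ioi hσ hr, Real.div_rpow (by norm_num) hr.le,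
      Real.one_rpow]
    ring

lemma beta_aux {u v : ℝ} (hu : 0 < u) (hv : 0 < v) :
    IntegrableOn (fun x : ℝ => x ^ (u-1) * (1-x) ^ (v-1)) (Ioo 0 1) ∧
      ∫ x in Ioo (0:ℝ) 1, x ^ (u-1) * (1-x) ^ (v-1)
        = Real.Gamma u * Real.Gamma v / Real.Gamma (u+v) := by
  have hre : ∀ x ∈ Ioc (0:ℝ) 1,
      ((x:ℂ) ^ ((u:ℂ)-1) * ((1:ℂ)-x) ^ ((v:ℂ)-1)) = ((x ^ (u-1) * (1-x) ^ (v-1) : ℝ) : ℂ) := by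
    intro x hx
    have h1 : ((x:ℂ) ^ ((u:ℂ)-1)) = ((x ^ (u-1) : ℝ) : ℂ) := by
      rw [show ((u:ℂ)-1) = ((u-1 : ℝ) : ℂ) by push_cast; ring,
        ← Complex.ofReal_cpow hx.1.le]
    have h2 : (((1:ℂ)-x) ^ ((v:ℂ)-1)) = (((1-x) ^ (v-1) : ℝ) : ℂ) := by
      rw [show ((1:ℂ)-(x:ℂ)) = (((1-x : ℝ)) : ℂ) by push_cast; ring,
        show ((v:ℂ)-1) = ((v-1 : ℝ) : ℂ) by push_cast; ring,
        ← Complex.ofReal_cpow (by linarith [hx.2])]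
    rw [h1, h2]; push_cast; ring
  have hint : IntervalIntegrable (fun x : ℝ => (x:ℂ) ^ ((u:ℂ)-1) * ((1:ℂ)-x) ^ ((v:ℂ)-1))
      volume 0 1 := Complex.betaIntegral_convergent (by simpa using hu) (by simpa using hv)
  have hioc : IntegrableOn (fun x : ℝ => (x:ℂ) ^ ((u:ℂ)-1) * ((1:ℂ)-x) ^ ((v:ℂ)-1))
      (Ioc 0 1) volume := by
    rw [← intervalIntegrable_iff_integrableOn_Ioc_of_le (by norm_num)]
    exact hint
  have hiocR : IntegrableOn (fun x : ℝ => x ^ (u-1) * (1-x) ^ (v-1)) (Ioc 0 1) volume := by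
    have h' := ((integrable_congr (ae_restrict_of_forall_mem measurableSet_Ioc hre)).mp hioc).re
    simpa [IntegrableOn] using h'
  have hintR : IntegrableOn (fun x : ℝ => x ^ (u-1) * (1-x) ^ (v-1)) (Ioo 0 1) volume :=
    hiocR.mono_set Ioo_subset_Ioc_self
  refine ⟨hintR, ?_⟩
  have hbeta : Complex.betaIntegral u v
      = ((∫ x in Ioo (0:ℝ) 1, x ^ (u-1) * (1-x) ^ (v-1) : ℝ) : ℂ) := by
    rw [Complex.betaIntegral, intervalIntegral.integral_of_le (by norm_num : (0:ℝ) ≤ 1)]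
    rw [setIntegral_congr_fun measurableSet_Ioc hre]
    rw [integral_Ioc_eq_integral_Ioo]
    exact integral_ofReal
  have key := Complex.Gamma_mul_Gamma_eq_betaIntegral
    (s := u) (t := v) (by simpa using hu) (by simpa using hv)
  rw [hbeta] at key
  have huv : ((u:ℂ) + v) = ((u + v : ℝ) : ℂ) := by push_cast; ring
  rw [huv, Complex.Gamma_ofReal, Complex.Gamma_ofReal, Complex.Gamma_ofReal] at key
  have keyR : Real.Gamma u * Real.Gamma v
      = Real.Gamma (u+v) * ∫ x in Ioo (0:ℝ) 1, x ^ (u-1) * (1-x) ^ (v-1) := by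
    exact_mod_cast key
  have hG : Real.Gamma (u+v) ≠ 0 := (Real.Gamma_pos_of_pos (by positivity)).ne'
  field_simp [hG] at keyR ⊢
  linarith [keyR]

-- image of Ioo 0 1 under sqrt
lemma sqrt_image_Ioo01 : Real.sqrt '' Ioo 0 1 = Ioo 0 1 := by
  ext y
  constructor
  · rintro ⟨x, ⟨hx0, hx1⟩, rfl⟩
    exact ⟨Real.sqrt_pos.2 hx0, by
      have := Real.sqrt_lt_sqrt hx0.le hx1
      simpa using this⟩
  · rintro ⟨hy0, hy1⟩
    exact ⟨y^2, ⟨by positivity, by nlinarith⟩, Real.sqrt_sq hy0.le⟩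

lemma sqrt_deriv_on : ∀ x ∈ Ioo (0:ℝ) 1,
    HasDerivWithinAt Real.sqrt (1 / (2 * Real.sqrt x)) (Ioo 0 1) x := fun x hx =>
  ((Real.hasDerivAt_sqrt hx.1.ne')).hasDerivWithinAt

lemma sqrt_injOn : InjOn Real.sqrt (Ioo 0 1) := fun a ha b hb h => by
  have ha' := Real.sq_sqrt ha.1.le
  have hb' := Real.sq_sqrt hb.1.le
  have h2 : Real.sqrt a ^ 2 = Real.sqrt b ^ 2 := by rw [h]
  rw [ha', hb'] at h2; exact h2

lemma evenMoment_aux {p : ℝ} (hp : 1/2 < p) (n : ℕ) :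
    IntegrableOn (fun u : ℝ => u ^ (2*n) * (1-u^2) ^ (p-3/2)) (Ioo (-1) 1) ∧
      ∫ u in Ioo (-1:ℝ) 1, u ^ (2*n) * (1-u^2) ^ (p-3/2)
        = Real.Gamma (n+1/2) * Real.Gamma (p-1/2) / Real.Gamma (n+p) := by
  have hu : (0:ℝ) < n + 1/2 := by positivity
  have hv : (0:ℝ) < p - 1/2 := by linarith
  obtain ⟨hbint, hbval⟩ := beta_aux hu hv
  set g : ℝ → ℝ := fun u => u ^ (2*n) * (1-u^2) ^ (p-3/2) with hg
  -- transfer along sqrt : Ioo 0 1 → Ioo 0 1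
  have hcong : ∀ x ∈ Ioo (0:ℝ) 1,
      |1 / (2 * Real.sqrt x)| • g (Real.sqrt x) = (1/2) * (x ^ (((n:ℝ)+1/2)-1) * (1-x) ^ ((p-1/2)-1)) := by
    intro x hx
    have hx0 : (0:ℝ) < x := hx.1
    have hsq : Real.sqrt x ^ (2*n) = x ^ n := by
      rw [pow_mul, Real.sq_sqrt hx0.le]
    have hs2 : Real.sqrt x ^ 2 = x := Real.sq_sqrt hx0.le
    have hsp : (0:ℝ) < Real.sqrt x := Real.sqrt_pos.2 hx0
    rw [smul_eq_mul, abs_of_pos (by positivity)]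
    rw [hg]
    simp only []
    rw [hsq, hs2]
    have : x ^ ((n+1/2)-1 : ℝ) = x ^ n / Real.sqrt x := by
      rw [Real.sqrt_eq_rpow, show ((n:ℝ)+1/2)-1 = (n:ℝ) + (-(1/2)) by ring,
        Real.rpow_add hx0, Real.rpow_natCast, Real.rpow_neg hx0.le]
      ring
    rw [this, show ((p-1/2)-1 : ℝ) = p - 3/2 by ring]
    field_simp
  have hint01 : IntegrableOn g (Ioo 0 1) := by
    rw [← sqrt_image_Ioo01,
      integrableOn_image_iff_integrableOn_abs_deriv_smul measurableSet_Ioo sqrt_deriv_on sqrt_injOn]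
    refine (IntegrableOn.congr_fun ?_ (fun x hx => (hcong x hx).symm) measurableSet_Ioo)
    exact (hbint.const_mul _)
  have hval01 : ∫ u in Ioo (0:ℝ) 1, g u
      = (1/2) * (Real.Gamma (n+1/2) * Real.Gamma (p-1/2) / Real.Gamma (n+p)) := by
    conv_lhs => rw [← sqrt_image_Ioo01]
    rw [integral_image_eq_integral_abs_deriv_smul measurableSet_Ioo sqrt_deriv_on sqrt_injOn]
    rw [setIntegral_congr_fun measurableSet_Ioo hcong, integral_const_mul, hbval,
      show (n:ℝ)+1/2+(p-1/2) = n+p by ring]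
  -- negative part via neg
  have hnegim : (fun x : ℝ => -x) '' Ioo 0 1 = Ioo (-1) 0 := by
    simpa using Set.image_neg_Ioo (a := (0:ℝ)) (b := 1)
  have hnderiv : ∀ x ∈ Ioo (0:ℝ) 1, HasDerivWithinAt (fun x : ℝ => -x) (-1) (Ioo 0 1) x :=
    fun x hx => (hasDerivAt_neg x).hasDerivWithinAt
  have hninj : InjOn (fun x : ℝ => -x) (Ioo 0 1) := fun a _ b _ h => by simpa using h
  have hneg_eq : ∀ x ∈ Ioo (0:ℝ) 1, |(-1:ℝ)| • g (-x) = g x := by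
    intro x hx
    simp [hg, neg_pow, pow_mul, smul_eq_mul]
  have hintneg : IntegrableOn g (Ioo (-1) 0) := by
    rw [← hnegim, integrableOn_image_iff_integrableOn_abs_deriv_smul measurableSet_Ioo
      hnderiv hninj]
    exact IntegrableOn.congr_fun hint01 (fun x hx => (hneg_eq x hx).symm) measurableSet_Ioo
  have hvalneg : ∫ u in Ioo (-1:ℝ) 0, g u = ∫ u in Ioo (0:ℝ) 1, g u := by
    conv_lhs => rw [← hnegim]
    rw [integral_image_eq_integral_abs_deriv_smul measurableSet_Ioo hnderiv hninj]
    exact setIntegral_congr_fun measurableSet_Ioo hneg_eq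
  -- combine
  have hsplit : Ioo (-1:ℝ) 1 = Ioo (-1) 0 ∪ Ico 0 1 :=
    (Set.Ioo_union_Ico_eq_Ioo (by norm_num) (by norm_num)).symm
  have hintico : IntegrableOn g (Ico 0 1) := by
    rwa [integrableOn_Ico_iff_integrableOn_Ioo]
  have hdisj : Disjoint (Ioo (-1:ℝ) 0) (Ico 0 1) := by
    apply Set.disjoint_left.2
    rintro x ⟨_, h0⟩ ⟨h0', _⟩
    linarith
  have hint : IntegrableOn g (Ioo (-1) 1) := by
    rw [hsplit]; exact hintneg.union hintico
  refine ⟨hint, ?_⟩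
  rw [hsplit, setIntegral_union hdisj measurableSet_Ico hintneg hintico,
    integral_Ico_eq_integral_Ioo, hvalneg, hval01]
  ring
lemma tslice_aux {p : ℝ} (hp : 1/2 < p) (n : ℕ) {s : ℝ} (hs : 0 < s) :
    IntegrableOn (fun t : ℝ => t ^ (2*n) * (s - t^2) ^ (p-3/2))
      (Ioo (-Real.sqrt s) (Real.sqrt s)) ∧
      ∫ t in Ioo (-Real.sqrt s) (Real.sqrt s), t ^ (2*n) * (s - t^2) ^ (p-3/2)
        = s ^ (p-1) * s ^ n * (Real.Gamma (n+1/2) * Real.Gamma (p-1/2) / Real.Gamma (n+p)) := by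
  obtain ⟨hmint, hmval⟩ := evenMoment_aux hp n
  have hsp : (0:ℝ) < Real.sqrt s := Real.sqrt_pos.2 hs
  have him : (fun u : ℝ => Real.sqrt s * u) '' Ioo (-1) 1
      = Ioo (-Real.sqrt s) (Real.sqrt s) := by
    rw [Set.image_mul_left_Ioo hsp]; rw [mul_neg_one, mul_one]
  have hderiv : ∀ u ∈ Ioo (-1:ℝ) 1,
      HasDerivWithinAt (fun u : ℝ => Real.sqrt s * u) (Real.sqrt s) (Ioo (-1) 1) u :=
    fun u _ => ((hasDerivAt_id u).const_mul (Real.sqrt s)).hasDerivWithinAt.congr_deriv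
      (by ring)
  have hinj : InjOn (fun u : ℝ => Real.sqrt s * u) (Ioo (-1) 1) :=
    fun a _ b _ h => by
      exact mul_left_cancel₀ hsp.ne' h
  have hcong : ∀ u ∈ Ioo (-1:ℝ) 1,
      |Real.sqrt s| • ((Real.sqrt s * u) ^ (2*n) * (s - (Real.sqrt s * u)^2) ^ (p-3/2))
        = s ^ (p-1) * s ^ n * (u ^ (2*n) * (1-u^2) ^ (p-3/2)) := by
    intro u hu
    have h1 : (Real.sqrt s * u) ^ (2*n) = s ^ n * u ^ (2*n) := by
      rw [mul_pow, pow_mul, Real.sq_sqrt hs.le]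
    have h2 : s - (Real.sqrt s * u)^2 = s * (1 - u^2) := by
      rw [mul_pow, Real.sq_sqrt hs.le]; ring
    have h3 : (s * (1 - u^2)) ^ (p-3/2) = s ^ (p-3/2) * (1-u^2) ^ (p-3/2) :=
      Real.mul_rpow hs.le (by nlinarith [hu.1, hu.2])
    have h4 : Real.sqrt s * s ^ (p-3/2 : ℝ) = s ^ (p-1 : ℝ) := by
      rw [Real.sqrt_eq_rpow, ← Real.rpow_add hs]
      congr 1
      ring
    rw [smul_eq_mul, abs_of_pos hsp, h1, h2, h3]
    calc Real.sqrt s * (s ^ n * u ^ (2*n) * (s ^ (p-3/2) * (1-u^2) ^ (p-3/2)))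
        = (Real.sqrt s * s ^ (p-3/2)) * s ^ n * (u ^ (2*n) * (1-u^2) ^ (p-3/2)) := by ring
      _ = s ^ (p-1) * s ^ n * (u ^ (2*n) * (1-u^2) ^ (p-3/2)) := by rw [h4]
  constructor
  · rw [← him, integrableOn_image_iff_integrableOn_abs_deriv_smul measurableSet_Ioo hderiv hinj]
    exact IntegrableOn.congr_fun ((hmint.const_mul _)) (fun u hu => (hcong u hu).symm)
      measurableSet_Ioo
  · rw [← him, integral_image_eq_integral_abs_deriv_smul measurableSet_Ioo hderiv hinj,
      setIntegral_congr_fun measurableSet_Ioo hcong, integral_const_mul, hmval]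
def Sset : Set (ℝ×ℝ×ℝ) := {x | 0 < x.1 ∧ 0 < x.2.1 ∧ 0 < x.1*x.2.1 - x.2.2^2}

lemma measurableSet_Sset : MeasurableSet Sset := by
  have h1 : MeasurableSet {x : ℝ×ℝ×ℝ | 0 < x.1} :=
    measurableSet_lt measurable_const measurable_fst
  have h2 : MeasurableSet {x : ℝ×ℝ×ℝ | 0 < x.2.1} :=
    measurableSet_lt measurable_const (measurable_fst.comp measurable_snd)
  have h3 : MeasurableSet {x : ℝ×ℝ×ℝ | 0 < x.1*x.2.1 - x.2.2^2} :=
    measurableSet_lt measurable_const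
      ((measurable_fst.mul (measurable_fst.comp measurable_snd)).sub
        ((measurable_snd.comp measurable_snd).pow_const 2))
  have : Sset = {x : ℝ×ℝ×ℝ | 0 < x.1} ∩ ({x | 0 < x.2.1} ∩ {x | 0 < x.1*x.2.1 - x.2.2^2}) := by
    ext x; simp [Sset, Set.mem_setOf_eq, and_assoc]
  rw [this]; exact h1.inter (h2.inter h3)

lemma tset_eq {s : ℝ} (hs : 0 < s) :
    {t : ℝ | 0 < s - t^2} = Ioo (-Real.sqrt s) (Real.sqrt s) := by
  ext t
  simp only [Set.mem_setOf_eq, Set.mem_Ioo, ← abs_lt]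
  rw [show (0 < s - t^2) ↔ t^2 < s by constructor <;> intro <;> linarith]
  rw [← sq_abs]
  exact (Real.lt_sqrt (abs_nonneg t)).symm

lemma slice3d {h : ℝ×ℝ×ℝ → ℝ≥0∞} (hh : Measurable h) :
    ∫⁻ x in Sset, h x
      = ∫⁻ x₁ in Ioi (0:ℝ), ∫⁻ x₂ in Ioi (0:ℝ),
          ∫⁻ t in Ioo (-Real.sqrt (x₁*x₂)) (Real.sqrt (x₁*x₂)), h (x₁, x₂, t) := by
  have hS := measurableSet_Sset
  rw [← lintegral_indicator hS, Measure.volume_eq_prod,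
    lintegral_prod _ ((hh.indicator hS).aemeasurable)]
  have L3 : (fun x₁ : ℝ => ∫⁻ y : ℝ×ℝ, Sset.indicator h (x₁, y))
      = (Ioi (0:ℝ)).indicator (fun x₁ =>
          ∫⁻ y : ℝ×ℝ, ({y : ℝ×ℝ | 0 < y.1 ∧ 0 < x₁*y.1 - y.2^2}).indicator
            (fun y => h (x₁, y)) y) := by
    funext x₁
    by_cases hx₁ : x₁ ∈ Ioi (0:ℝ)
    · rw [Set.indicator_of_mem hx₁]
      congr 1
      funext y
      by_cases hy : y ∈ {y : ℝ×ℝ | 0 < y.1 ∧ 0 < x₁*y.1 - y.2^2}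
      · rw [Set.indicator_of_mem hy,
          Set.indicator_of_mem (show (x₁,y) ∈ Sset from ⟨hx₁, hy.1, hy.2⟩)]
      · rw [Set.indicator_of_notMem hy, Set.indicator_of_notMem
          (fun hmem => hy ⟨hmem.2.1, hmem.2.2⟩)]
    · rw [Set.indicator_of_notMem hx₁]
      have : ∀ y : ℝ×ℝ, Sset.indicator h (x₁, y) = 0 := by
        intro y
        apply Set.indicator_of_notMem
        intro hmem
        exact hx₁ hmem.1
      simp only [this, lintegral_zero]
  rw [L3, lintegral_indicator measurableSet_Ioi]
  apply setLIntegral_congr_fun measurableSet_Ioi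
  intro x₁ hx₁
  beta_reduce
  have hh1 : Measurable fun y : ℝ×ℝ => h (x₁, y) := hh.comp measurable_prodMk_left
  have hU : MeasurableSet {y : ℝ×ℝ | 0 < y.1 ∧ 0 < x₁*y.1 - y.2^2} := by
    have e : {y : ℝ×ℝ | 0 < y.1 ∧ 0 < x₁*y.1 - y.2^2}
        = {y : ℝ×ℝ | 0 < y.1} ∩ {y | 0 < x₁*y.1 - y.2^2} := by
      ext y; simp [Set.mem_setOf_eq]
    rw [e]
    exact (measurableSet_lt measurable_const measurable_fst).inter
      (measurableSet_lt measurable_const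
        ((measurable_const.mul measurable_fst).sub (measurable_snd.pow_const 2)))
  rw [Measure.volume_eq_prod, lintegral_prod _ ((hh1.indicator hU).aemeasurable)]
  have L4 : (fun x₂ : ℝ => ∫⁻ t : ℝ, ({y : ℝ×ℝ | 0 < y.1 ∧ 0 < x₁*y.1 - y.2^2}).indicator
        (fun y => h (x₁, y)) (x₂, t))
      = (Ioi (0:ℝ)).indicator (fun x₂ =>
          ∫⁻ t : ℝ, ({t : ℝ | 0 < x₁*x₂ - t^2}).indicator (fun t => h (x₁, x₂, t)) t) := by
    funext x₂
    by_cases hx₂ : x₂ ∈ Ioi (0:ℝ)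
    · rw [Set.indicator_of_mem hx₂]
      congr 1
      funext t
      by_cases ht : t ∈ {t : ℝ | 0 < x₁*x₂ - t^2}
      · rw [Set.indicator_of_mem ht, Set.indicator_of_mem
          (show (x₂,t) ∈ {y : ℝ×ℝ | 0 < y.1 ∧ 0 < x₁*y.1 - y.2^2} from ⟨hx₂, ht⟩)]
      · rw [Set.indicator_of_notMem ht, Set.indicator_of_notMem
          (fun hmem => ht hmem.2)]
    · rw [Set.indicator_of_notMem hx₂]
      have : ∀ t : ℝ, ({y : ℝ×ℝ | 0 < y.1 ∧ 0 < x₁*y.1 - y.2^2}).indicator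
          (fun y => h (x₁, y)) (x₂, t) = 0 := by
        intro t
        apply Set.indicator_of_notMem
        intro hmem
        exact hx₂ hmem.1
      simp only [this, lintegral_zero]
  rw [L4, lintegral_indicator measurableSet_Ioi]
  apply setLIntegral_congr_fun measurableSet_Ioi
  intro x₂ hx₂
  beta_reduce
  rw [tset_eq (mul_pos hx₁ hx₂), lintegral_indicator measurableSet_Ioo]
open Filter Topology in
lemma hyp_summable {α β q z : ℝ} (hα : 0 < α) (hβ : 0 < β) (hq : 0 < q)
    (hz0 : 0 ≤ z) (hz : z < 1) :
    Summable (fun n : ℕ =>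
      risingFac α n * risingFac β n / (risingFac q n * (n.factorial:ℝ)) * z^n) := by
  set f : ℕ → ℝ := fun n =>
    risingFac α n * risingFac β n / (risingFac q n * (n.factorial:ℝ)) * z^n with hf
  have hfpos : ∀ n, 0 ≤ f n := by
    intro n
    have := risingFac_pos hα n
    have := risingFac_pos hβ n
    have := risingFac_pos hq n
    have : (0:ℝ) < n.factorial := by exact_mod_cast n.factorial_pos
    positivity
  have hden : ∀ n : ℕ, (0:ℝ) < (q+n)*(n+1) := by
    intro n; positivity
  have hrec : ∀ n : ℕ, f (n+1) = f n * (z * ((α+n)*(β+n)) / ((q+n)*(n+1))) := by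
    intro n
    have h1 := (risingFac_pos hq n).ne'
    have h2 : ((n.factorial : ℝ)) ≠ 0 := by exact_mod_cast n.factorial_pos.ne'
    rw [hf]
    simp only [risingFac_succ, Nat.factorial_succ, pow_succ]
    push_cast
    field_simp
  have hrat : Tendsto (fun n : ℕ => z * ((α+n)*(β+n)) / ((q+n)*(n+1))) atTop (𝓝 z) := by
    have heq : (fun n : ℕ => z * ((α+n)*(β+n)) / ((q+n)*(n+1)))
        = fun n : ℕ => z * ((α+n)/((n:ℝ)+1)) * ((β+n)/(q+n)) := by
      funext n
      have h1 : ((n:ℝ)+1) ≠ 0 := by positivity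
      have h2 : (q+(n:ℝ)) ≠ 0 := by positivity
      field_simp
    rw [heq]
    have hn1 : Tendsto (fun n : ℕ => (n:ℝ)+1) atTop atTop :=
      tendsto_atTop_add_const_right atTop 1 tendsto_natCast_atTop_atTop
    have hnq : Tendsto (fun n : ℕ => q+(n:ℝ)) atTop atTop :=
      tendsto_atTop_add_const_left atTop q tendsto_natCast_atTop_atTop
    have t1 : Tendsto (fun n : ℕ => (α+n)/((n:ℝ)+1)) atTop (𝓝 1) := by
      have e : (fun n : ℕ => (α+n)/((n:ℝ)+1)) = fun n : ℕ => 1 + (α-1)/((n:ℝ)+1) := by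
        funext n
        have : ((n:ℝ)+1) ≠ 0 := by positivity
        field_simp
        ring
      rw [e]
      have := tendsto_const_nhds (x := (α-1:ℝ)) (f := atTop (α := ℕ)) |>.div_atTop hn1
      simpa using tendsto_const_nhds.add this
    have t2 : Tendsto (fun n : ℕ => (β+n)/(q+(n:ℝ))) atTop (𝓝 1) := by
      have e : (fun n : ℕ => (β+n)/(q+(n:ℝ))) = fun n : ℕ => 1 + (β-q)/(q+(n:ℝ)) := by
        funext n
        have : (q+(n:ℝ)) ≠ 0 := by positivity
        field_simp
        ring
      rw [e]
      have := tendsto_const_nhds (x := (β-q:ℝ)) (f := atTop (α := ℕ)) |>.div_atTop hnq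
      simpa using tendsto_const_nhds.add this
    have := (tendsto_const_nhds (x := z) (f := atTop (α := ℕ)) |>.mul t1).mul t2
    simpa using this
  have hr1 : (1+z)/2 < 1 := by linarith
  apply summable_of_ratio_norm_eventually_le hr1
  have hev : ∀ᶠ n : ℕ in atTop, z * ((α+n)*(β+n)) / ((q+n)*(n+1)) < (1+z)/2 :=
    hrat.eventually_lt_const (by linarith)
  filter_upwards [hev] with n hn
  rw [Real.norm_eq_abs, Real.norm_eq_abs, abs_of_nonneg (hfpos _), abs_of_nonneg (hfpos _),
    hrec n]
  have hratnn : 0 ≤ z * ((α+n)*(β+n)) / ((q+n)*(n+1)) := by positivity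
  calc f n * (z * ((α+n)*(β+n)) / ((q+n)*(n+1))) ≤ f n * ((1+z)/2) :=
        mul_le_mul_of_nonneg_left hn.le (hfpos n)
    _ = (1+z)/2 * f n := by ring
lemma per_n {p c₁ c₂ a₁ a₂ : ℝ} (hp : 1/2 < p) (hc₁ : 0 < c₁) (hc₂ : 0 < c₂)
    (ha₁ : -p < a₁) (ha₂ : -p < a₂) {K : ℝ} (hK : 0 ≤ K) (d : ℝ) (n : ℕ) :
    ∫⁻ x in Sset, ENNReal.ofReal (K * (x.1 ^ a₁ * Real.exp (-(c₁*x.1)) *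
        (x.2.1 ^ a₂ * Real.exp (-(c₂*x.2.1))) *
        ((d*x.2.2) ^ (2*n) / ((2*n).factorial : ℝ) * (x.1*x.2.1 - x.2.2^2) ^ (p-3/2))))
      = ENNReal.ofReal (K * (d ^ (2*n) / ((2*n).factorial : ℝ)) *
          (Real.Gamma (n+1/2) * Real.Gamma (p-1/2) / Real.Gamma (n+p)) *
          (Real.Gamma (a₁+p+n) / c₁ ^ (a₁+p+(n:ℝ))) *
          (Real.Gamma (a₂+p+n) / c₂ ^ (a₂+p+(n:ℝ)))) := by
  have hσ₁ : (0:ℝ) < a₁+p+(n:ℝ) := by have : (0:ℝ) ≤ n := n.cast_nonneg; linarith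
  have hσ₂ : (0:ℝ) < a₂+p+(n:ℝ) := by have : (0:ℝ) ≤ n := n.cast_nonneg; linarith
  have hd2 : (0:ℝ) ≤ d ^ (2*n) := by rw [pow_mul]; positivity
  have hfac : (0:ℝ) < ((2*n).factorial : ℝ) := by exact_mod_cast (2*n).factorial_pos
  have hBval : (0:ℝ) ≤ Real.Gamma (n+1/2) * Real.Gamma (p-1/2) / Real.Gamma (n+p) := by
    have h1 : (0:ℝ) < Real.Gamma (n+1/2) := Real.Gamma_pos_of_pos (by positivity)
    have h2 : (0:ℝ) < Real.Gamma (p-1/2) := Real.Gamma_pos_of_pos (by linarith)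
    have h3 : (0:ℝ) < Real.Gamma (n+p) := Real.Gamma_pos_of_pos (by positivity)
    positivity
  set Bval := Real.Gamma (n+1/2) * Real.Gamma (p-1/2) / Real.Gamma (n+p) with hBvaldef
  have hmeas : Measurable (fun x : ℝ×ℝ×ℝ => ENNReal.ofReal (K * (x.1 ^ a₁ *
      Real.exp (-(c₁*x.1)) * (x.2.1 ^ a₂ * Real.exp (-(c₂*x.2.1))) *
      ((d*x.2.2) ^ (2*n) / ((2*n).factorial : ℝ) * (x.1*x.2.1 - x.2.2^2) ^ (p-3/2))))) := by
    fun_prop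
  rw [slice3d hmeas]
  obtain ⟨hg₂int, hg₂val⟩ := gammaAux hσ₂ hc₂
  obtain ⟨hg₁int, hg₁val⟩ := gammaAux hσ₁ hc₁
  have hg₂nn : (0:ℝ) ≤ Real.Gamma (a₂+p+n) / c₂ ^ (a₂+p+(n:ℝ)) := by
    have := Real.Gamma_pos_of_pos hσ₂; positivity
  -- innermost and middle computation for fixed x₁ > 0
  have main₁ : ∀ x₁ ∈ Ioi (0:ℝ),
      (∫⁻ x₂ in Ioi (0:ℝ), ∫⁻ t in Ioo (-Real.sqrt (x₁*x₂)) (Real.sqrt (x₁*x₂)),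
          ENNReal.ofReal (K * (x₁ ^ a₁ * Real.exp (-(c₁*x₁)) *
            (x₂ ^ a₂ * Real.exp (-(c₂*x₂))) *
            ((d*t) ^ (2*n) / ((2*n).factorial : ℝ) * (x₁*x₂ - t^2) ^ (p-3/2)))))
        = ENNReal.ofReal ((K * (d ^ (2*n) / ((2*n).factorial : ℝ)) * Bval *
            (Real.Gamma (a₂+p+n) / c₂ ^ (a₂+p+(n:ℝ)))) *
            (x₁ ^ ((a₁+p+(n:ℝ))-1) * Real.exp (-(c₁*x₁)))) := by
    intro x₁ hx₁
    rw [Set.mem_Ioi] at hx₁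
    have step₂ : ∀ x₂ ∈ Ioi (0:ℝ),
        (∫⁻ t in Ioo (-Real.sqrt (x₁*x₂)) (Real.sqrt (x₁*x₂)),
          ENNReal.ofReal (K * (x₁ ^ a₁ * Real.exp (-(c₁*x₁)) *
            (x₂ ^ a₂ * Real.exp (-(c₂*x₂))) *
            ((d*t) ^ (2*n) / ((2*n).factorial : ℝ) * (x₁*x₂ - t^2) ^ (p-3/2)))))
          = ENNReal.ofReal ((K * (d ^ (2*n) / ((2*n).factorial : ℝ)) * Bval *
              (x₁ ^ a₁ * Real.exp (-(c₁*x₁)) * x₁ ^ (p-1) * x₁ ^ n)) *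
              (x₂ ^ ((a₂+p+(n:ℝ))-1) * Real.exp (-(c₂*x₂)))) := by
      intro x₂ hx₂
      rw [Set.mem_Ioi] at hx₂
      have hs : 0 < x₁*x₂ := mul_pos hx₁ hx₂
      obtain ⟨htint, htval⟩ := tslice_aux hp n hs
      have hc : (0:ℝ) ≤ K * (x₁ ^ a₁ * Real.exp (-(c₁*x₁)) *
          (x₂ ^ a₂ * Real.exp (-(c₂*x₂))) * (d ^ (2*n) / ((2*n).factorial : ℝ))) := by
        have h1 : (0:ℝ) ≤ x₁ ^ a₁ := Real.rpow_nonneg hx₁.le _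
        have h2 : (0:ℝ) ≤ x₂ ^ a₂ := Real.rpow_nonneg hx₂.le _
        positivity
      have hre : ∀ t : ℝ, K * (x₁ ^ a₁ * Real.exp (-(c₁*x₁)) *
            (x₂ ^ a₂ * Real.exp (-(c₂*x₂))) *
            ((d*t) ^ (2*n) / ((2*n).factorial : ℝ) * (x₁*x₂ - t^2) ^ (p-3/2)))
          = (K * (x₁ ^ a₁ * Real.exp (-(c₁*x₁)) * (x₂ ^ a₂ * Real.exp (-(c₂*x₂))) *
              (d ^ (2*n) / ((2*n).factorial : ℝ)))) *
            (t ^ (2*n) * (x₁*x₂ - t^2) ^ (p-3/2)) := by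
        intro t
        rw [mul_pow d t (2*n)]
        ring
      simp only [hre]
      simp only [ENNReal.ofReal_mul hc]
      rw [lintegral_const_mul' _ _ ENNReal.ofReal_ne_top]
      have hnn : (0:ℝ→ℝ) ≤ᵐ[volume.restrict (Ioo (-Real.sqrt (x₁*x₂)) (Real.sqrt (x₁*x₂)))]
          (fun t => t ^ (2*n) * (x₁*x₂ - t^2) ^ (p-3/2)) := by
        refine ae_restrict_of_forall_mem measurableSet_Ioo ?_
        intro t ht
        rw [← tset_eq hs] at ht
        have h1 : (0:ℝ) ≤ t ^ (2*n) := by rw [pow_mul]; positivity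
        have h2 : (0:ℝ) < x₁*x₂ - t^2 := ht
        positivity
      rw [← ofReal_integral_eq_lintegral_ofReal htint hnn, htval]
      rw [← ENNReal.ofReal_mul hc]
      congr 1
      have e₂ : x₂ ^ ((a₂+p+(n:ℝ))-1) = x₂ ^ a₂ * x₂ ^ (p-1) * (x₂:ℝ) ^ (n:ℝ) := by
        rw [← Real.rpow_add hx₂, ← Real.rpow_add hx₂]
        congr 1
        ring
      have e₃ : (x₁*x₂) ^ (p-1) = x₁ ^ (p-1) * x₂ ^ (p-1) := Real.mul_rpow hx₁.le hx₂.le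
      have e₄ : (x₁*x₂) ^ n = x₁ ^ n * x₂ ^ n := mul_pow x₁ x₂ n
      rw [e₂, e₃, e₄, Real.rpow_natCast]
      ring
    rw [setLIntegral_congr_fun measurableSet_Ioi step₂]
    have hcK : (0:ℝ) ≤ K * (d ^ (2*n) / ((2*n).factorial : ℝ)) * Bval *
        (x₁ ^ a₁ * Real.exp (-(c₁*x₁)) * x₁ ^ (p-1) * x₁ ^ n) := by
      have h1 : (0:ℝ) ≤ x₁ ^ a₁ := Real.rpow_nonneg hx₁.le _
      have h2 : (0:ℝ) ≤ x₁ ^ (p-1) := Real.rpow_nonneg hx₁.le _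
      positivity
    simp only [ENNReal.ofReal_mul hcK]
    rw [lintegral_const_mul' _ _ ENNReal.ofReal_ne_top]
    have hnn₂ : (0:ℝ→ℝ) ≤ᵐ[volume.restrict (Ioi 0)]
        (fun x₂ => x₂ ^ ((a₂+p+(n:ℝ))-1) * Real.exp (-(c₂*x₂))) := by
      refine ae_restrict_of_forall_mem measurableSet_Ioi ?_
      intro x₂ hx₂
      have : (0:ℝ) ≤ x₂ ^ ((a₂+p+(n:ℝ))-1) := Real.rpow_nonneg (le_of_lt hx₂) _
      positivity
    rw [← ofReal_integral_eq_lintegral_ofReal hg₂int hnn₂, hg₂val,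
      ← ENNReal.ofReal_mul hcK]
    congr 1
    have e₁ : x₁ ^ ((a₁+p+(n:ℝ))-1) = x₁ ^ a₁ * x₁ ^ (p-1) * (x₁:ℝ) ^ (n:ℝ) := by
      rw [← Real.rpow_add hx₁, ← Real.rpow_add hx₁]
      congr 1
      ring
    rw [e₁, Real.rpow_natCast]
    ring
  rw [setLIntegral_congr_fun measurableSet_Ioi main₁]
  have hcK₂ : (0:ℝ) ≤ K * (d ^ (2*n) / ((2*n).factorial : ℝ)) * Bval *
      (Real.Gamma (a₂+p+n) / c₂ ^ (a₂+p+(n:ℝ))) := by positivity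
  simp only [ENNReal.ofReal_mul hcK₂]
  rw [lintegral_const_mul' _ _ ENNReal.ofReal_ne_top]
  have hnn₁ : (0:ℝ→ℝ) ≤ᵐ[volume.restrict (Ioi 0)]
      (fun x₁ => x₁ ^ ((a₁+p+(n:ℝ))-1) * Real.exp (-(c₁*x₁))) := by
    refine ae_restrict_of_forall_mem measurableSet_Ioi ?_
    intro x₁ hx₁
    have : (0:ℝ) ≤ x₁ ^ ((a₁+p+(n:ℝ))-1) := Real.rpow_nonneg (le_of_lt hx₁) _
    positivity
  rw [← ofReal_integral_eq_lintegral_ofReal hg₁int hnn₁, hg₁val,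
    ← ENNReal.ofReal_mul hcK₂]
  congr 1
  ring
lemma Tn_eq {p c₁ c₂ c₁₂ a₁ a₂ : ℝ} (hp : 1/2 < p) (hc₁ : 0 < c₁) (hc₂ : 0 < c₂)
    (ha₁ : -p < a₁) (ha₂ : -p < a₂) (n : ℕ) :
    ((c₁*c₂ - c₁₂^2) ^ p / Gamma2 p) * ((2*c₁₂) ^ (2*n) / ((2*n).factorial : ℝ)) *
      (Real.Gamma (n+1/2) * Real.Gamma (p-1/2) / Real.Gamma (n+p)) *
      (Real.Gamma (a₁+p+n) / c₁ ^ (a₁+p+(n:ℝ))) *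
      (Real.Gamma (a₂+p+n) / c₂ ^ (a₂+p+(n:ℝ)))
    = ((c₁*c₂ - c₁₂^2) ^ p / (c₁ ^ (a₁+p) * c₂ ^ (a₂+p)) *
        (Real.Gamma (a₁+p) * Real.Gamma (a₂+p) / Real.Gamma p ^ 2)) *
      (risingFac (a₁+p) n * risingFac (a₂+p) n / (risingFac p n * (n.factorial : ℝ)) *
        (c₁₂^2/(c₁*c₂)) ^ n) := by
  have hpp : (0:ℝ) < p := by linarith
  have hα : (0:ℝ) < a₁+p := by linarith
  have hβ : (0:ℝ) < a₂+p := by linarith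
  have e1 : Real.Gamma ((n:ℝ)+1/2) = Real.sqrt π * risingFac (1/2) n := by
    rw [show (n:ℝ)+1/2 = 1/2+(n:ℝ) by ring, Gamma_add_nat (by norm_num) n,
      Real.Gamma_one_half_eq]
  have e2 : Real.Gamma ((n:ℝ)+p) = Real.Gamma p * risingFac p n := by
    rw [show (n:ℝ)+p = p+(n:ℝ) by ring, Gamma_add_nat hpp n]
  have e3 : Real.Gamma (a₁+p+(n:ℝ)) = Real.Gamma (a₁+p) * risingFac (a₁+p) n :=
    Gamma_add_nat hα n
  have e4 : Real.Gamma (a₂+p+(n:ℝ)) = Real.Gamma (a₂+p) * risingFac (a₂+p) n :=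
    Gamma_add_nat hβ n
  have e5 : Gamma2 p = Real.sqrt π * Real.Gamma p * Real.Gamma (p-1/2) := by
    rw [Gamma2, Real.sqrt_eq_rpow]
  have e6 : ((2*c₁₂) : ℝ) ^ (2*n) = 4 ^ n * (c₁₂^2) ^ n := by
    rw [pow_mul, show ((2*c₁₂):ℝ)^2 = 4 * c₁₂^2 by ring, mul_pow]
  have e7 : c₁ ^ (a₁+p+(n:ℝ)) = c₁ ^ (a₁+p) * c₁ ^ n := by
    rw [Real.rpow_add hc₁, Real.rpow_natCast]
  have e8 : c₂ ^ (a₂+p+(n:ℝ)) = c₂ ^ (a₂+p) * c₂ ^ n := by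
    rw [Real.rpow_add hc₂, Real.rpow_natCast]
  have e9 : ((c₁₂^2/(c₁*c₂)) : ℝ) ^ n = (c₁₂^2) ^ n / (c₁ ^ n * c₂ ^ n) := by
    rw [div_pow, mul_pow]
  have hsp : Real.sqrt π ≠ 0 := by positivity
  have hg1 : Real.Gamma p ≠ 0 := (Real.Gamma_pos_of_pos hpp).ne'
  have hg2 : Real.Gamma (p-1/2) ≠ 0 := (Real.Gamma_pos_of_pos (by linarith)).ne'
  have hr1 : risingFac (1/2) n ≠ 0 := (risingFac_pos (by norm_num) n).ne'
  have hr2 : risingFac p n ≠ 0 := (risingFac_pos hpp n).ne'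
  have hfn : (n.factorial : ℝ) ≠ 0 := by exact_mod_cast n.factorial_pos.ne'
  have h4 : ((4:ℝ)) ^ n ≠ 0 := by positivity
  have hb1 : c₁ ^ (a₁+p) ≠ 0 := (Real.rpow_pos_of_pos hc₁ _).ne'
  have hb2 : c₂ ^ (a₂+p) ≠ 0 := (Real.rpow_pos_of_pos hc₂ _).ne'
  have hb3 : (c₁:ℝ) ^ n ≠ 0 := by positivity
  have hb4 : (c₂:ℝ) ^ n ≠ 0 := by positivity
  rw [e1, e2, e3, e4, e5, e6, e7, e8, e9, factorial_two_mul]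
  set K0 := (c₁*c₂ - c₁₂^2) ^ p with hK0d
  set A := Real.sqrt π with hAd
  set G := Real.Gamma p with hGd
  set H := Real.Gamma (p-1/2) with hHd
  set Rh := risingFac (1/2) n with hRhd
  set Rp := risingFac p n with hRpd
  set R1 := risingFac (a₁+p) n with hR1d
  set R2 := risingFac (a₂+p) n with hR2d
  set G1 := Real.Gamma (a₁+p) with hG1d
  set G2 := Real.Gamma (a₂+p) with hG2d
  set F := (n.factorial : ℝ) with hFd
  set Q := ((4:ℝ)) ^ n with hQd
  set B1 := c₁ ^ (a₁+p) with hB1d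
  set B2 := c₂ ^ (a₂+p) with hB2d
  set D1 := c₁ ^ n with hD1d
  set D2 := c₂ ^ n with hD2d
  set Y := ((c₁₂^2 : ℝ)) ^ n with hYd
  field_simp
lemma main_aux {p c₁ c₂ c₁₂ a₁ a₂ : ℝ} (hp : 1/2 < p) (hc₁ : 0 < c₁) (hc₂ : 0 < c₂)
    (hdet : c₁₂^2 < c₁*c₂) (ha₁ : -p < a₁) (ha₂ : -p < a₂) :
    IntegrableOn
      (fun x : ℝ × ℝ × ℝ =>
        x.1 ^ a₁ * x.2.1 ^ a₂ *
          ((c₁ * c₂ - c₁₂ ^ 2) ^ p / Gamma2 p) *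
          Real.exp (-(c₁ * x.1 + c₂ * x.2.1 + 2 * c₁₂ * x.2.2)) *
          (x.1 * x.2.1 - x.2.2 ^ 2) ^ (p - 3 / 2)) Sset volume ∧
    ∫ x in Sset,
        x.1 ^ a₁ * x.2.1 ^ a₂ *
          ((c₁ * c₂ - c₁₂ ^ 2) ^ p / Gamma2 p) *
          Real.exp (-(c₁ * x.1 + c₂ * x.2.1 + 2 * c₁₂ * x.2.2)) *
          (x.1 * x.2.1 - x.2.2 ^ 2) ^ (p - 3 / 2)
      = (c₁ * c₂ - c₁₂ ^ 2) ^ p / (c₁ ^ (a₁ + p) * c₂ ^ (a₂ + p)) *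
          (Real.Gamma (a₁ + p) * Real.Gamma (a₂ + p) / Real.Gamma p ^ 2) *
          gaussHyp (a₁ + p) (a₂ + p) p (c₁₂ ^ 2 / (c₁ * c₂)) := by
  have hpp : (0:ℝ) < p := by linarith
  have hα : (0:ℝ) < a₁ + p := by linarith
  have hβ : (0:ℝ) < a₂ + p := by linarith
  have hdet0 : (0:ℝ) < c₁*c₂ - c₁₂^2 := by linarith
  have hG2pos : (0:ℝ) < Gamma2 p := by
    rw [Gamma2]
    have h1 : (0:ℝ) < Real.Gamma p := Real.Gamma_pos_of_pos hpp
    have h2 : (0:ℝ) < Real.Gamma (p-1/2) := Real.Gamma_pos_of_pos (by linarith)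
    positivity
  have hK : (0:ℝ) ≤ (c₁ * c₂ - c₁₂ ^ 2) ^ p / Gamma2 p := by positivity
  set K := (c₁ * c₂ - c₁₂ ^ 2) ^ p / Gamma2 p with hKdef
  set f : ℝ×ℝ×ℝ → ℝ := fun x =>
    x.1 ^ a₁ * x.2.1 ^ a₂ * K *
      Real.exp (-(c₁ * x.1 + c₂ * x.2.1 + 2 * c₁₂ * x.2.2)) *
      (x.1 * x.2.1 - x.2.2 ^ 2) ^ (p - 3 / 2) with hfdef
  set G : ℝ×ℝ×ℝ → ℝ := fun x =>
    K * (x.1 ^ a₁ * Real.exp (-(c₁*x.1)) * (x.2.1 ^ a₂ * Real.exp (-(c₂*x.2.1))) *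
      (Real.cosh (2*c₁₂*x.2.2) * (x.1*x.2.1 - x.2.2^2) ^ (p-3/2))) with hGdef
  set Gn : ℕ → ℝ×ℝ×ℝ → ℝ := fun n x =>
    K * (x.1 ^ a₁ * Real.exp (-(c₁*x.1)) * (x.2.1 ^ a₂ * Real.exp (-(c₂*x.2.1))) *
      ((2*c₁₂*x.2.2) ^ (2*n) / ((2*n).factorial : ℝ) * (x.1*x.2.1 - x.2.2^2) ^ (p-3/2)))
    with hGndef
  set Tn : ℕ → ℝ := fun n =>
    K * ((2*c₁₂) ^ (2*n) / ((2*n).factorial : ℝ)) *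
      (Real.Gamma (n+1/2) * Real.Gamma (p-1/2) / Real.Gamma (n+p)) *
      (Real.Gamma (a₁+p+n) / c₁ ^ (a₁+p+(n:ℝ))) *
      (Real.Gamma (a₂+p+n) / c₂ ^ (a₂+p+(n:ℝ))) with hTndef
  set C := (c₁ * c₂ - c₁₂ ^ 2) ^ p / (c₁ ^ (a₁ + p) * c₂ ^ (a₂ + p)) *
      (Real.Gamma (a₁ + p) * Real.Gamma (a₂ + p) / Real.Gamma p ^ 2) with hCdef
  have hTn_eq : ∀ n, Tn n = C *
      (risingFac (a₁+p) n * risingFac (a₂+p) n / (risingFac p n * (n.factorial : ℝ)) *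
        (c₁₂^2/(c₁*c₂)) ^ n) := by
    intro n
    rw [hTndef, hKdef, hCdef]
    exact Tn_eq hp hc₁ hc₂ ha₁ ha₂ n
  have hTn_nonneg : ∀ n, 0 ≤ Tn n := by
    intro n
    rw [hTndef]
    have h1 : (0:ℝ) ≤ (2*c₁₂) ^ (2*n) := by rw [pow_mul]; positivity
    have h2 : (0:ℝ) < ((2*n).factorial : ℝ) := by exact_mod_cast (2*n).factorial_pos
    have h3 : (0:ℝ) < Real.Gamma (n+1/2) := Real.Gamma_pos_of_pos (by positivity)
    have h4 : (0:ℝ) < Real.Gamma (p-1/2) := Real.Gamma_pos_of_pos (by linarith)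
    have h5 : (0:ℝ) < Real.Gamma (n+p) := Real.Gamma_pos_of_pos (by positivity)
    have h6 : (0:ℝ) < Real.Gamma (a₁+p+n) := Real.Gamma_pos_of_pos (by
      have : (0:ℝ) ≤ n := n.cast_nonneg; linarith)
    have h7 : (0:ℝ) < Real.Gamma (a₂+p+n) := Real.Gamma_pos_of_pos (by
      have : (0:ℝ) ≤ n := n.cast_nonneg; linarith)
    have h8 : (0:ℝ) < c₁ ^ (a₁+p+(n:ℝ)) := Real.rpow_pos_of_pos hc₁ _
    have h9 : (0:ℝ) < c₂ ^ (a₂+p+(n:ℝ)) := Real.rpow_pos_of_pos hc₂ _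
    positivity
  have hz0 : (0:ℝ) ≤ c₁₂^2/(c₁*c₂) := by positivity
  have hz1 : c₁₂^2/(c₁*c₂) < 1 := (div_lt_one (mul_pos hc₁ hc₂)).2 hdet
  have hterm_sum : Summable (fun n : ℕ =>
      risingFac (a₁+p) n * risingFac (a₂+p) n / (risingFac p n * (n.factorial : ℝ)) *
        (c₁₂^2/(c₁*c₂)) ^ n) := hyp_summable hα hβ hpp hz0 hz1
  have hTn_sum : Summable Tn := by
    have := hterm_sum.mul_left C
    exact this.congr (fun n => (hTn_eq n).symm)
  have hTn_tsum : ∑' n, Tn n = C * gaussHyp (a₁+p) (a₂+p) p (c₁₂^2/(c₁*c₂)) := by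
    rw [tsum_congr hTn_eq, tsum_mul_left, gaussHyp]
  -- lintegral of G
  have hGn_meas : ∀ n, Measurable (fun x : ℝ×ℝ×ℝ => ENNReal.ofReal (Gn n x)) := by
    intro n; rw [hGndef]; fun_prop
  have hpern : ∀ n, ∫⁻ x in Sset, ENNReal.ofReal (Gn n x) = ENNReal.ofReal (Tn n) := by
    intro n
    rw [hGndef, hTndef]
    exact per_n hp hc₁ hc₂ ha₁ ha₂ hK (2*c₁₂) n
  have hL : ∫⁻ x in Sset, ENNReal.ofReal (G x) = ENNReal.ofReal (∑' n, Tn n) := by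
    have h1 : ∀ x ∈ Sset, ENNReal.ofReal (G x) = ∑' n, ENNReal.ofReal (Gn n x) := by
      intro x hx
      obtain ⟨hx₁, hx₂, hx₃⟩ := hx
      set c : ℝ := K * (x.1 ^ a₁ * Real.exp (-(c₁*x.1)) * (x.2.1 ^ a₂ *
        Real.exp (-(c₂*x.2.1))) * (x.1*x.2.1 - x.2.2^2) ^ (p-3/2)) with hcdef
      have hsum : HasSum (fun n => Gn n x) (G x) := by
        have h0 := (Real.hasSum_cosh (2*c₁₂*x.2.2)).mul_left c
        have e1 : (fun n => Gn n x) = fun n => c * ((2*c₁₂*x.2.2) ^ (2*n) /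
            ((2*n).factorial : ℝ)) := by
          funext n; rw [hGndef, hcdef]; ring
        have e2 : G x = c * Real.cosh (2*c₁₂*x.2.2) := by rw [hGdef, hcdef]; ring
        rw [e1, e2]
        exact h0
      have hnn : ∀ n, 0 ≤ Gn n x := by
        intro n
        rw [hGndef]
        have h1 : (0:ℝ) ≤ x.1 ^ a₁ := Real.rpow_nonneg hx₁.le _
        have h2 : (0:ℝ) ≤ x.2.1 ^ a₂ := Real.rpow_nonneg hx₂.le _
        have h3 : (0:ℝ) ≤ (2*c₁₂*x.2.2) ^ (2*n) := by rw [pow_mul]; positivity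
        have h4 : (0:ℝ) < ((2*n).factorial : ℝ) := by exact_mod_cast (2*n).factorial_pos
        have h5 : (0:ℝ) ≤ (x.1*x.2.1 - x.2.2^2) ^ (p-3/2) := Real.rpow_nonneg hx₃.le _
        positivity
      rw [← hsum.tsum_eq, ENNReal.ofReal_tsum_of_nonneg hnn hsum.summable]
    rw [setLIntegral_congr_fun measurableSet_Sset h1,
      lintegral_tsum (fun n => ((hGn_meas n).aemeasurable)),
      tsum_congr hpern, ← ENNReal.ofReal_tsum_of_nonneg hTn_nonneg hTn_sum]
  have hGmeas : Measurable G := by rw [hGdef]; fun_prop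
  have hGnn : ∀ x ∈ Sset, 0 ≤ G x := by
    intro x hx
    obtain ⟨hx₁, hx₂, hx₃⟩ := hx
    rw [hGdef]
    have h1 : (0:ℝ) ≤ x.1 ^ a₁ := Real.rpow_nonneg hx₁.le _
    have h2 : (0:ℝ) ≤ x.2.1 ^ a₂ := Real.rpow_nonneg hx₂.le _
    have h3 : (0:ℝ) < Real.cosh (2*c₁₂*x.2.2) := Real.cosh_pos _
    have h5 : (0:ℝ) ≤ (x.1*x.2.1 - x.2.2^2) ^ (p-3/2) := Real.rpow_nonneg hx₃.le _
    positivity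
  have hGnn_ae : 0 ≤ᵐ[volume.restrict Sset] G :=
    ae_restrict_of_forall_mem measurableSet_Sset hGnn
  have hGint : IntegrableOn G Sset := by
    refine ⟨hGmeas.aestronglyMeasurable.restrict, ?_⟩
    rw [hasFiniteIntegral_iff_ofReal hGnn_ae, hL]
    exact ENNReal.ofReal_lt_top
  have hGval : ∫ x in Sset, G x = ∑' n, Tn n := by
    rw [integral_eq_lintegral_of_nonneg_ae hGnn_ae hGmeas.aestronglyMeasurable.restrict,
      hL, ENNReal.toReal_ofReal (tsum_nonneg hTn_nonneg)]
  -- relate f and G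
  have hfmeas : Measurable f := by rw [hfdef]; fun_prop
  have hexp3 : ∀ A B D : ℝ, Real.exp (-(A+B+D)) = Real.exp (-A) * Real.exp (-B) *
      Real.exp (-D) := by
    intro A B D
    rw [← Real.exp_add, ← Real.exp_add]
    congr 1
    ring
  have hDnn : ∀ x ∈ Sset, (0:ℝ) ≤ K * (x.1 ^ a₁ * Real.exp (-(c₁*x.1)) *
      (x.2.1 ^ a₂ * Real.exp (-(c₂*x.2.1))) * (x.1*x.2.1 - x.2.2^2) ^ (p-3/2)) := by
    intro x hx
    obtain ⟨hx₁, hx₂, hx₃⟩ := hx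
    have h1 : (0:ℝ) ≤ x.1 ^ a₁ := Real.rpow_nonneg hx₁.le _
    have h2 : (0:ℝ) ≤ x.2.1 ^ a₂ := Real.rpow_nonneg hx₂.le _
    have h5 : (0:ℝ) ≤ (x.1*x.2.1 - x.2.2^2) ^ (p-3/2) := Real.rpow_nonneg hx₃.le _
    positivity
  have hfeq : ∀ x : ℝ×ℝ×ℝ, f x = (K * (x.1 ^ a₁ * Real.exp (-(c₁*x.1)) *
      (x.2.1 ^ a₂ * Real.exp (-(c₂*x.2.1))) * (x.1*x.2.1 - x.2.2^2) ^ (p-3/2))) *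
      Real.exp (-(2*c₁₂*x.2.2)) := by
    intro x
    rw [hfdef]
    simp only []
    rw [hexp3 (c₁*x.1) (c₂*x.2.1) (2*c₁₂*x.2.2)]
    ring
  have hbound : ∀ x ∈ Sset, ‖f x‖ ≤ 2 * G x := by
    intro x hx
    have hD := hDnn x hx
    have hfx : 0 ≤ f x := by
      rw [hfeq x]; positivity
    rw [Real.norm_eq_abs, abs_of_nonneg hfx, hfeq x]
    have h2G : 2 * G x = (K * (x.1 ^ a₁ * Real.exp (-(c₁*x.1)) *
        (x.2.1 ^ a₂ * Real.exp (-(c₂*x.2.1))) * (x.1*x.2.1 - x.2.2^2) ^ (p-3/2))) *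
        (2 * Real.cosh (2*c₁₂*x.2.2)) := by
      rw [hGdef]; ring
    rw [h2G]
    apply mul_le_mul_of_nonneg_left _ hD
    rw [Real.cosh_eq]
    have := Real.exp_pos (2*c₁₂*x.2.2)
    linarith
  have hfint : IntegrableOn f Sset := by
    refine Integrable.mono' (hGint.const_mul 2) hfmeas.aestronglyMeasurable.restrict ?_
    exact ae_restrict_of_forall_mem measurableSet_Sset hbound
  -- negation symmetry
  set ν : ℝ×ℝ×ℝ → ℝ×ℝ×ℝ := fun x => (x.1, x.2.1, -x.2.2) with hνdef
  have hν : MeasurePreserving ν (volume : Measure (ℝ×ℝ×ℝ)) volume := by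
    have e : (volume : Measure (ℝ×ℝ×ℝ))
        = (volume : Measure ℝ).prod ((volume : Measure ℝ).prod (volume : Measure ℝ)) := by
      rw [← Measure.volume_eq_prod, ← Measure.volume_eq_prod]
    have h0 := (MeasurePreserving.id (volume : Measure ℝ)).prod
      ((MeasurePreserving.id (volume : Measure ℝ)).prod
        (Measure.measurePreserving_neg (volume : Measure ℝ)))
    rw [e]
    exact h0
  have hSpre : ν ⁻¹' Sset = Sset := by
    ext x
    simp [Sset, hνdef, Set.mem_preimage, Set.mem_setOf_eq, neg_sq]
  have hνS : MeasurePreserving ν (volume.restrict Sset) (volume.restrict Sset) := by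
    have := hν.restrict_preimage measurableSet_Sset
    rwa [hSpre] at this
  have hemb : MeasurableEmbedding ν :=
    Homeomorph.measurableEmbedding
      ((Homeomorph.refl ℝ).prodCongr ((Homeomorph.refl ℝ).prodCongr (Homeomorph.neg ℝ)))
  have hcomp : ∫ x in Sset, f (ν x) = ∫ x in Sset, f x := hνS.integral_comp hemb f
  have hfνint : IntegrableOn (f ∘ ν) Sset :=
    (hνS.integrable_comp_emb hemb).2 hfint
  have hGff : ∀ x ∈ Sset, G x = (f x + f (ν x)) / 2 := by
    intro x hx
    have hfν : f (ν x) = (K * (x.1 ^ a₁ * Real.exp (-(c₁*x.1)) *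
        (x.2.1 ^ a₂ * Real.exp (-(c₂*x.2.1))) * (x.1*x.2.1 - x.2.2^2) ^ (p-3/2))) *
        Real.exp (2*c₁₂*x.2.2) := by
      rw [hfeq (ν x), hνdef]
      simp only [neg_sq, neg_neg]
      rw [show -(2*c₁₂*(-x.2.2)) = 2*c₁₂*x.2.2 by ring]
    simp only [hGdef]
    rw [hfν, hfeq x, Real.cosh_eq]
    ring
  have hGf : ∫ x in Sset, G x = ∫ x in Sset, f x := by
    rw [setIntegral_congr_fun measurableSet_Sset hGff]
    have : ∫ x in Sset, (f x + f (ν x)) / 2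
        = ((∫ x in Sset, f x) + ∫ x in Sset, f (ν x)) / 2 := by
      have hfνint' : IntegrableOn (fun x => f (ν x)) Sset volume := hfνint
      rw [integral_div, integral_add hfint hfνint']
    rw [this, hcomp]
    ring
  refine ⟨hfint, ?_⟩
  rw [← hGf, hGval, hTn_tsum, hCdef]

theorem statement10 (p c₁ c₂ c₁₂ a₁ a₂ : ℝ) (hp : 1 / 2 < p)
    (hc : (Matrix.of ![![c₁, c₁₂], ![c₁₂, c₂]]).PosDef)
    (ha₁ : -p < a₁) (ha₂ : -p < a₂) :
    IntegrableOn
      (fun x : ℝ × ℝ × ℝ =>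
        x.1 ^ a₁ * x.2.1 ^ a₂ *
          ((c₁ * c₂ - c₁₂ ^ 2) ^ p / Gamma2 p) *
          Real.exp (-(c₁ * x.1 + c₂ * x.2.1 + 2 * c₁₂ * x.2.2)) *
          (x.1 * x.2.1 - x.2.2 ^ 2) ^ (p - 3 / 2))
      {x : ℝ × ℝ × ℝ | 0 < x.1 ∧ 0 < x.2.1 ∧ 0 < x.1 * x.2.1 - x.2.2 ^ 2} volume ∧
    ∫ x : ℝ × ℝ × ℝ in
        {x : ℝ × ℝ × ℝ | 0 < x.1 ∧ 0 < x.2.1 ∧ 0 < x.1 * x.2.1 - x.2.2 ^ 2},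
        x.1 ^ a₁ * x.2.1 ^ a₂ *
          ((c₁ * c₂ - c₁₂ ^ 2) ^ p / Gamma2 p) *
          Real.exp (-(c₁ * x.1 + c₂ * x.2.1 + 2 * c₁₂ * x.2.2)) *
          (x.1 * x.2.1 - x.2.2 ^ 2) ^ (p - 3 / 2)
      = (c₁ * c₂ - c₁₂ ^ 2) ^ p / (c₁ ^ (a₁ + p) * c₂ ^ (a₂ + p)) *
          (Real.Gamma (a₁ + p) * Real.Gamma (a₂ + p) / Real.Gamma p ^ 2) *
          gaussHyp (a₁ + p) (a₂ + p) p (c₁₂ ^ 2 / (c₁ * c₂)) := by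
  have hc₁ : 0 < c₁ := by
    have h := hc.dotProduct_mulVec_pos (x := ![1, 0]) (by
      intro h
      have := congrFun h 0
      simp at this)
    simpa [Matrix.mulVec, dotProduct, Fin.sum_univ_two] using h
  have hc₂ : 0 < c₂ := by
    have h := hc.dotProduct_mulVec_pos (x := ![0, 1]) (by
      intro h
      have := congrFun h 1
      simp at this)
    simpa [Matrix.mulVec, dotProduct, Fin.sum_univ_two] using h
  have hdet : c₁₂^2 < c₁*c₂ := by
    have h := hc.det_pos
    rw [Matrix.det_fin_two_of] at h
    nlinarith [h]
  exact main_aux hp hc₁ hc₂ hdet ha₁ ha₂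

end
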